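/- Let a be an integer greater than 1 and n a positive integer. Then Φ_n(a) has a prime factor p such that p does not divide a^m − 1 for any positive integer m < n, unless (a, n) = (2, 1), (a, n) = (2, 6), or n = 2 and a + 1 is a power of 2. -/

import Mathlib

open Polynomial

private theorem lemA' {a : ℤ} {n q : ℕ} (hn : 0 < n) (hq : q.Prime)
    (hdvd : (q : ℤ) ∣ (cyclotomic n ℤ).eval a) :
    IsPrimitiveRoot ((a : ZMod q)) (n / q ^ (n.factorization q)) := by
  haveI : Fact q.Prime := ⟨hq⟩
  set k := n.factorization q with hk
  set m := n / q ^ k with hm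
  have hqm : ¬ q ∣ m := Nat.not_dvd_ordCompl hq hn.ne'
  have hnm : n = q ^ k * m := (Nat.ordProj_mul_ordCompl_eq_self n q).symm
  haveI : NeZero ((m : ZMod q)) := ⟨fun h => hqm ((ZMod.natCast_eq_zero_iff _ _).mp h)⟩
  have hroot : (cyclotomic (q ^ k * m) (ZMod q)).IsRoot ((a : ZMod q)) := by
    have h0 := (ZMod.intCast_zmod_eq_zero_iff_dvd _ q).mpr hdvd
    rw [← hnm, IsRoot.def, ← map_cyclotomic_int n (ZMod q), eval_intCast_map, Int.cast_id]
    exact h0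
  exact (isRoot_cyclotomic_prime_pow_mul_iff_of_charP).mp hroot

private theorem lemB' {a : ℤ} {n q : ℕ} (hn : 0 < n) (hq : q.Prime)
    (hdvd : (q : ℤ) ∣ (cyclotomic n ℤ).eval a) :
    (q:ℤ) ∣ a ^ (n / q ^ (n.factorization q)) - 1 ∧ (n / q ^ (n.factorization q)) ∣ q - 1 := by
  haveI : Fact q.Prime := ⟨hq⟩
  set m := n / q ^ (n.factorization q) with hm
  have hprim := lemA' hn hq hdvd
  have hmpos : 0 < m := Nat.ordCompl_pos q hn.ne'
  have h1 : ((a : ZMod q)) ^ m = 1 := hprim.pow_eq_one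
  constructor
  · rw [← ZMod.intCast_zmod_eq_zero_iff_dvd]
    push_cast
    rw [h1]; ring
  · have hb : ((a : ZMod q)) ≠ 0 := by
      intro h0
      rw [h0, zero_pow hmpos.ne'] at h1
      exact zero_ne_one h1
    exact hprim.dvd_of_pow_eq_one (q - 1) (ZMod.pow_card_sub_one_eq_one hb)

private theorem lemT' {n q : ℕ} (hn : 0 < n) (hqn : q ∣ n) (hq1 : 1 < q) (a : ℤ) :
    (cyclotomic n ℤ).eval a ∣ ∑ i ∈ Finset.range q, (a ^ (n / q)) ^ i := by
  set s := n / q with hs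
  have hspos : 0 < s := Nat.div_pos (Nat.le_of_dvd hn hqn) (by omega)
  have hsn : s * q = n := Nat.div_mul_cancel hqn
  have hsd : s ∈ n.properDivisors := Nat.mem_properDivisors.mpr
    ⟨⟨q, hsn.symm⟩, by nlinarith⟩
  have hdvd := X_pow_sub_one_mul_cyclotomic_dvd_X_pow_sub_one_of_dvd ℤ hsd
  have hG : ((X : ℤ[X]) ^ n - 1) = (X ^ s - 1) * ∑ i ∈ Finset.range q, (X ^ s) ^ i := by
    rw [mul_comm, geom_sum_mul, ← pow_mul, hsn]
  rw [hG] at hdvd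
  have hne : ((X : ℤ[X]) ^ s - 1) ≠ 0 := by
    intro h
    have := congrArg (eval 2) h
    simp at this
    have : (2:ℤ)^s ≥ 2 := by
      calc (2:ℤ)^s ≥ 2^1 := pow_le_pow_right₀ (by norm_num) hspos
      _ = 2 := pow_one 2
    omega
  have hpoly : cyclotomic n ℤ ∣ ∑ i ∈ Finset.range q, ((X : ℤ[X]) ^ s) ^ i := by
    have h3 : (X ^ s - 1) * cyclotomic n ℤ ∣ (X ^ s - 1) * ∑ i ∈ Finset.range q, ((X:ℤ[X]) ^ s) ^ i := hdvd
    rw [mul_dvd_mul_iff_left hne] at h3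
    exact h3
  obtain ⟨c, hc⟩ := hpoly
  refine ⟨c.eval a, ?_⟩
  have h2 := congrArg (eval a) hc
  rw [eval_finset_sum] at h2
  simpa using h2

private theorem lemE' {q : ℕ} (hq : Odd q) (hq1 : 1 < q) {c : ℤ} (hc : (q : ℤ) ∣ c - 1) :
    ¬ ((q:ℤ) ^ 2 ∣ ∑ i ∈ Finset.range q, c ^ i) := by
  obtain ⟨t, ht⟩ := hc
  have hct : c = 1 + q * t := by linarith
  have key : ∀ i : ℕ, c ^ i ≡ 1 + i * q * t [ZMOD ((q:ℤ)^2)] := by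
    intro i
    induction i with
    | zero => simp
    | succ i ih =>
      have h2 : ((q:ℤ)^2) ∣ (1 + i*q*t) * c - (1 + (↑(i+1)) * q * t) := by
        refine ⟨i * t^2, ?_⟩
        rw [hct]; push_cast; ring
      calc c ^ (i+1) = c ^ i * c := pow_succ c i
        _ ≡ (1 + i*q*t) * c [ZMOD ((q:ℤ)^2)] := Int.ModEq.mul ih (Int.ModEq.refl _)
        _ ≡ 1 + (↑(i+1)) * q * t [ZMOD ((q:ℤ)^2)] := (Int.modEq_iff_dvd.mpr h2).symm
  have hsum : ∀ k : ℕ, (∑ i ∈ Finset.range k, c ^ i) ≡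
      k + (∑ i ∈ Finset.range k, (i:ℤ)) * q * t [ZMOD ((q:ℤ)^2)] := by
    intro k
    induction k with
    | zero => simp
    | succ k ih =>
      rw [Finset.sum_range_succ, Finset.sum_range_succ]
      have h4 := Int.ModEq.add ih (key k)
      calc (∑ i ∈ Finset.range k, c ^ i) + c ^ k
          ≡ (k + (∑ i ∈ Finset.range k, (i:ℤ)) * q * t) + (1 + k * q * t) [ZMOD ((q:ℤ)^2)] := h4
        _ = ↑(k+1) + ((∑ i ∈ Finset.range k, (i:ℤ)) + k) * q * t := by push_cast; ring
  obtain ⟨s, hs⟩ := hq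
  have hgauss : (∑ i ∈ Finset.range q, (i:ℤ)) = q * s := by
    have h2 : (∑ i ∈ Finset.range q, i) * 2 = q * (q - 1) := Finset.sum_range_id_mul_two q
    have hq1' : q - 1 = 2 * s := by omega
    rw [hq1', show q * (2*s) = (q*s)*2 by ring] at h2
    have h3 : (∑ i ∈ Finset.range q, i) = q * s := Nat.eq_of_mul_eq_mul_right two_pos h2
    have h4 : ((∑ i ∈ Finset.range q, i : ℕ) : ℤ) = ((q*s : ℕ) : ℤ) := by exact_mod_cast h3
    push_cast at h4
    exact h4
  have hT : (∑ i ∈ Finset.range q, c ^ i) ≡ q + (q:ℤ)^2 * (s*t) [ZMOD ((q:ℤ)^2)] := by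
    have := hsum q
    rwa [hgauss, show ((q:ℤ)*s)*q*t = (q:ℤ)^2*(s*t) by ring] at this
  intro hdvd
  have h0 : (0:ℤ) ≡ q + (q:ℤ)^2 * (s*t) [ZMOD ((q:ℤ)^2)] :=
    ((Int.modEq_zero_iff_dvd).mpr hdvd).symm.trans hT
  have h1' : ((q:ℤ)^2) ∣ (q:ℤ) := by
    have h2 := Int.ModEq.dvd h0
    have h3 : ((q:ℤ)^2) ∣ (q:ℤ) + (q:ℤ)^2 * (s*t) := by simpa using h2
    exact (dvd_add_right ⟨s*t, rfl⟩).mp (by rwa [add_comm] at h3)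
  have := Int.le_of_dvd (by positivity) h1'
  nlinarith [sq_nonneg (q:ℤ)]

private theorem evalR' (n : ℕ) (a : ℤ) :
    (((cyclotomic n ℤ).eval a : ℤ) : ℝ) = (cyclotomic n ℝ).eval (a : ℝ) := by
  rw [← map_cyclotomic_int n ℝ, eval_intCast_map]
  norm_num

private theorem natIneq1' {q : ℕ} (h : 1 ≤ q) : q ≤ 2 ^ (q - 1) := by
  induction q with
  | zero => omega
  | succ k ih =>
    rcases Nat.eq_or_lt_of_le h with h1 | h1
    · simp [← h1]
    · have hk : 1 ≤ k := by omega
      have := ih hk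
      have h2 : k + 1 - 1 = (k - 1) + 1 := by omega
      rw [h2, pow_succ]
      omega

private theorem natIneq2' {q : ℕ} (h : 4 ≤ q) : 3 * q < 2 ^ q := by
  induction q with
  | zero => omega
  | succ k ih =>
    rcases Nat.lt_or_ge k 4 with h1 | h1
    · interval_cases k <;> simp_all
    · have := ih (by omega)
      rw [pow_succ]
      omega

private theorem natIneq3' {q : ℕ} (h : 3 ≤ q) : q ≤ 4 ^ (q - 2) := by
  induction q with
  | zero => omega
  | succ k ih =>
    rcases Nat.lt_or_ge k 3 with h1 | h1
    · have hk : k = 2 := by omega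
      subst hk; norm_num
    · have := ih (by omega)
      have h2 : k + 1 - 2 = (k - 2) + 1 := by omega
      rw [h2, pow_succ]
      omega

private theorem expandIter' {q m : ℕ} (hq : q.Prime) : ∀ j : ℕ,
    Polynomial.expand ℤ (q ^ j) (cyclotomic (m * q) ℤ) = cyclotomic (m * q * q ^ j) ℤ := by
  intro j
  induction j with
  | zero => simp
  | succ j ih =>
    have h1 : q ^ (j+1) = q * q ^ j := by ring
    rw [h1, ← expand_expand, ih,
      cyclotomic_expand_eq_cyclotomic hq ⟨m * q ^ j, by ring⟩,
      show m * q * q ^ j * q = m * q * (q * q ^ j) by ring]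

private theorem lemK' {m' q : ℕ} (hq : q.Prime) (hm' : 0 < m') (hqm : q ∣ m') {b : ℤ}
    (hb : 4 ≤ b) (heq : (cyclotomic m' ℤ).eval b = (q:ℤ)) : False := by
  have hm2 : 2 ≤ m' := le_trans hq.two_le (Nat.le_of_dvd hm' hqm)
  have hφ : q - 1 ≤ m'.totient := by
    refine Nat.le_of_dvd (Nat.totient_pos.mpr hm') ?_
    rw [← Nat.totient_prime hq]
    exact Nat.totient_dvd_of_dvd hqm
  have hbR : (1:ℝ) < (b:ℝ) := by
    have : (4:ℝ) ≤ (b:ℝ) := by exact_mod_cast hb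
    linarith
  have hlow := sub_one_pow_totient_lt_cyclotomic_eval hm2 hbR
  rw [← evalR', heq] at hlow
  push_cast at hlow
  have hb3 : (3:ℝ) ≤ (b:ℝ) - 1 := by
    have : (4:ℝ) ≤ (b:ℝ) := by exact_mod_cast hb
    linarith
  have c1 : (q:ℝ) ≤ 2^(q-1) := by exact_mod_cast natIneq1' hq.one_le
  have c2 : ((2:ℝ))^(q-1) ≤ 3^(q-1) := pow_le_pow_left₀ (by norm_num) (by norm_num) _
  have c3 : ((3:ℝ))^(q-1) ≤ ((b:ℝ)-1)^(q-1) := pow_le_pow_left₀ (by norm_num) hb3 _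
  have c4 : ((b:ℝ)-1)^(q-1) ≤ ((b:ℝ)-1)^(m'.totient) :=
    pow_le_pow_right₀ (by linarith) hφ
  linarith

theorem cyclotomic_has_primitive_prime_factor
    (a : ℤ) (n : ℕ) (ha : 1 < a) (hn : 0 < n) :
    (∃ p : ℕ, p.Prime ∧ (p : ℤ) ∣ (Polynomial.cyclotomic n ℤ).eval a ∧
      ∀ m : ℕ, 0 < m → m < n → ¬ (p : ℤ) ∣ a ^ m - 1) ∨
    (a = 2 ∧ n = 1) ∨ (a = 2 ∧ n = 6) ∨ (n = 2 ∧ ∃ k : ℕ, a + 1 = 2 ^ k) := by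
  -- case n = 1
  rcases eq_or_lt_of_le (show 1 ≤ n from hn) with h1 | h1
  · -- 1 = n
    subst h1
    by_cases ha2 : a = 2
    · right; left; exact ⟨ha2, rfl⟩
    · left
      have hNe : (cyclotomic 1 ℤ).eval a = a - 1 := by simp [cyclotomic_one]
      have h2 : (a - 1).natAbs ≠ 1 := by
        have : 2 ≤ a - 1 := by omega
        omega
      obtain ⟨p, hp, hpd⟩ := Nat.exists_prime_and_dvd h2
      refine ⟨p, hp, ?_, fun m hm hm' _ => by omega⟩
      rw [hNe]
      exact (Int.natCast_dvd_natCast.mpr hpd).trans (Int.natAbs_dvd.mpr dvd_rfl)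
  rcases eq_or_lt_of_le (show 2 ≤ n from h1) with h2 | h2
  · -- 2 = n
    subst h2
    have hNe : (cyclotomic 2 ℤ).eval a = a + 1 := by simp [cyclotomic_two]
    by_cases hpow : ∀ r : ℕ, r.Prime → r ∣ (a+1).natAbs → r = 2
    · right; right; right
      refine ⟨rfl, ?_⟩
      have hpos : (a+1).natAbs ≠ 0 := by omega
      have := Nat.eq_prime_pow_of_unique_prime_dvd hpos (fun {d} hd hdd => hpow d hd hdd)
      refine ⟨(a+1).natAbs.primeFactorsList.length, ?_⟩
      have hcast : a + 1 = ((a+1).natAbs : ℤ) := by omega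
      rw [hcast]
      exact_mod_cast congrArg (Nat.cast : ℕ → ℤ) this
    · push_neg at hpow
      obtain ⟨r, hr, hrd, hr2⟩ := hpow
      left
      refine ⟨r, hr, ?_, ?_⟩
      · rw [hNe]
        exact (Int.natCast_dvd_natCast.mpr hrd).trans (Int.natAbs_dvd.mpr dvd_rfl)
      · intro m hm hm' hdd
        have hm1 : m = 1 := by omega
        subst hm1
        have hd1 : (r:ℤ) ∣ a + 1 := (Int.natCast_dvd_natCast.mpr hrd).trans (Int.natAbs_dvd.mpr dvd_rfl)
        have hd2 : (r:ℤ) ∣ 2 := by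
          have := dvd_sub hd1 (by simpa using hdd)
          simpa using this
        have : r ∣ 2 := by exact_mod_cast Int.natCast_dvd_natCast.mp (by exact_mod_cast hd2)
        exact hr2 ((Nat.prime_dvd_prime_iff_eq hr Nat.prime_two).mp this)
  · -- 2 < n
    set N := (cyclotomic n ℤ).eval a with hN
    have hNpos : 0 < N := cyclotomic_pos h2 a
    have haR : (1:ℝ) < (a:ℝ) := by exact_mod_cast ha
    have ha2R : (2:ℝ) ≤ (a:ℝ) := by exact_mod_cast ha
    have hbound : ((a:ℝ) - 1)^(n.totient) < (N:ℝ) := by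
      rw [hN, evalR']
      exact sub_one_pow_totient_lt_cyclotomic_eval (by omega) haR
    have hN2 : 2 ≤ N := by
      have h1' : (1:ℝ) ≤ ((a:ℝ)-1)^(n.totient) := one_le_pow₀ (by linarith)
      have : (1:ℝ) < (N:ℝ) := lt_of_le_of_lt h1' hbound
      exact_mod_cast this
    by_cases hex : ∃ q : ℕ, q.Prime ∧ (q:ℤ) ∣ N ∧ ¬ q ∣ n
    · left
      obtain ⟨q, hq, hqN, hqn⟩ := hex
      have hk0 : n.factorization q = 0 := Nat.factorization_eq_zero_of_not_dvd hqn
      have hprim := lemA' hn hq hqN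
      rw [hk0, pow_zero, Nat.div_one] at hprim
      refine ⟨q, hq, hqN, fun m hm hmn hd => ?_⟩
      haveI : Fact q.Prime := ⟨hq⟩
      have hz : ((a : ZMod q)) ^ m = 1 := by
        have h5 := (ZMod.intCast_zmod_eq_zero_iff_dvd _ q).mpr hd
        push_cast at h5
        linear_combination h5
      have := hprim.dvd_of_pow_eq_one m hz
      exact absurd (Nat.le_of_dvd hm this) (by omega)
    · push_neg at hex
      set M := N.toNat with hM
      have hMN : (M : ℤ) = N := Int.toNat_of_nonneg hNpos.le
      have hM2 : 2 ≤ M := by omega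
      obtain ⟨q, hq, hqM⟩ : ∃ q, q.Prime ∧ q ∣ M :=
        ⟨M.minFac, Nat.minFac_prime (by omega), Nat.minFac_dvd M⟩
      haveI : Fact q.Prime := ⟨hq⟩
      have castdvd : ∀ r : ℕ, r ∣ M → (r:ℤ) ∣ N := fun r hr => by
        rw [← hMN]; exact_mod_cast Int.natCast_dvd_natCast.mpr hr
      have hqN : (q:ℤ) ∣ N := castdvd q hqM
      have hqn : q ∣ n := hex q hq hqN
      obtain ⟨hqa, hqm1⟩ := lemB' hn hq hqN
      set k := n.factorization q with hk
      set m := n / q ^ k with hm0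
      have hk1 : 1 ≤ k := hq.factorization_pos_of_dvd hn.ne' hqn
      have hmpos : 0 < m := Nat.ordCompl_pos q hn.ne'
      have hnm : n = q ^ k * m := (Nat.ordProj_mul_ordCompl_eq_self n q).symm
      have hmq : m ≤ q - 1 := Nat.le_of_dvd (by have := hq.two_le; omega) hqm1
      have key : ∀ r, r.Prime → r ∣ M → r = q := by
        intro r hr hrM
        by_contra hne
        have hrN : (r:ℤ) ∣ N := castdvd r hrM
        have hrn : r ∣ n := hex r hr hrN
        obtain ⟨_, hrm1⟩ := lemB' hn hr hrN
        have hdvdm : ∀ s t : ℕ, s.Prime → t.Prime → s ≠ t → s ∣ n →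
            (t:ℤ) ∣ N → s ∣ (n / t ^ (n.factorization t)) := by
          intro s t hs ht hst hsn htN
          have hnt : n = t ^ (n.factorization t) * (n / t ^ (n.factorization t)) :=
            (Nat.ordProj_mul_ordCompl_eq_self n t).symm
          rcases (Nat.Prime.dvd_mul hs).mp (hnt ▸ hsn) with h | h
          · exact absurd ((Nat.prime_dvd_prime_iff_eq hs ht).mp (hs.dvd_of_dvd_pow h)) hst
          · exact h
        have h1r : r ∣ m := hdvdm r q hr hq hne hrn hqN
        have h2r : q ∣ (n / r ^ (n.factorization r)) := hdvdm q r hq hr (fun h => hne h.symm) hqn hrN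
        have hrq : r ≤ q - 1 := Nat.le_of_dvd (by have := hq.two_le; omega) (h1r.trans hqm1)
        have hqr : q ≤ r - 1 := Nat.le_of_dvd (by have := hr.two_le; omega) (h2r.trans hrm1)
        have := hq.two_le
        have := hr.two_le
        omega
      have hMq : M = q ^ M.primeFactorsList.length :=
        Nat.eq_prime_pow_of_unique_prime_dvd (by omega) (fun {d} hd hdM => key d hd hdM)
      set e := M.primeFactorsList.length with he
      have he1 : 1 ≤ e := by
        by_contra h
        have h0 : e = 0 := by omega
        rw [h0, pow_zero] at hMq
        omega
      have hmnq : (n / q) = m * q ^ (k-1) := by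
        have hqk : q ^ k = q * q ^ (k-1) := by
          rw [← pow_succ']
          congr 1
          omega
        rw [hnm, hqk]
        rw [show q * q ^ (k-1) * m = (m * q ^ (k-1)) * q by ring]
        exact Nat.mul_div_cancel _ hq.pos
      have hc1 : (q:ℤ) ∣ a ^ (n/q) - 1 := by
        refine hqa.trans ?_
        rw [hmnq, pow_mul]
        simpa using sub_dvd_pow_sub_pow (a^m) 1 (q^(k-1))
      have hT := lemT' hn hqn hq.one_lt a
      have hnot4 : ¬ ((q:ℤ)^2 ∣ ∑ i ∈ Finset.range q, (a^(n/q))^i) := by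
        rcases hq.eq_two_or_odd' with hq2 | hqodd
        · subst hq2
          have hm1 : m = 1 := by omega
          have hk2 : 2 ≤ k := by
            by_contra h
            have : k = 1 := by omega
            rw [this, pow_one, hm1, mul_one] at hnm
            omega
          have hsum2 : (∑ i ∈ Finset.range 2, (a^(n/2))^i) = 1 + a^(n/2) := by
            rw [Finset.sum_range_succ, Finset.sum_range_succ]
            simp
          have hsq : a^(n/2) = (a^(2^(k-2)))^2 := by
            rw [← pow_mul]
            congr 1
            rw [hmnq, hm1, one_mul]
            have : k - 1 = (k-2) + 1 := by omega
            rw [this, pow_succ]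
          intro hdvd
          have h2T : (2:ℤ) ∣ ∑ i ∈ Finset.range 2, (a^(n/2))^i := by
            exact_mod_cast hqN.trans hT
          rw [hsum2, hsq] at hdvd h2T
          set b := a^(2^(k-2)) with hb
          have hbodd : ¬ (2:ℤ) ∣ b := by
            intro ⟨u, hu⟩
            rw [hu] at h2T
            obtain ⟨w, hw⟩ := h2T
            have : 1 + (2*u)^2 = 1 + 4 * u^2 := by ring
            rw [this] at hw
            omega
          obtain ⟨u, hu⟩ : ∃ u, b = 2*u + 1 := by
            rcases Int.even_or_odd b with ⟨u, hu⟩ | ⟨u, hu⟩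
            · exact absurd ⟨u, by omega⟩ hbodd
            · exact ⟨u, hu⟩
          have hval : 1 + b^2 = 4 * (u^2 + u) + 2 := by rw [hu]; ring
          rw [hval] at hdvd
          have h4 : ((2:ℤ):ℤ)^2 = 4 := by norm_num
          rw [show ((2:ℕ):ℤ) = (2:ℤ) by norm_num, h4] at hdvd
          obtain ⟨w, hw⟩ := hdvd
          omega
        · exact lemE' hqodd hq.one_lt hc1
      have he2 : e = 1 := by
        by_contra h
        have h2 : 2 ≤ e := by omega
        have hq2M : q^2 ∣ M := hMq ▸ pow_dvd_pow q h2
        have hq2N : (q:ℤ)^2 ∣ N := by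
          rw [← hMN]
          exact_mod_cast Int.natCast_dvd_natCast.mpr hq2M
        exact hnot4 (hq2N.trans hT)
      have hNq : N = (q:ℤ) := by
        rw [← hMN, hMq, he2, pow_one]
      rw [hNq] at hbound
      rcases eq_or_lt_of_le (show (2:ℤ) ≤ a by omega) with ha2 | ha3
      swap
      · -- 3 ≤ a : contradiction
        exfalso
        have hφ : q - 1 ≤ n.totient := by
          refine Nat.le_of_dvd (Nat.totient_pos.mpr hn) ?_
          rw [← Nat.totient_prime hq]
          exact Nat.totient_dvd_of_dvd hqn
        have hq2R : ((q:ℝ)) ≤ 2^(q-1) := by exact_mod_cast natIneq1' hq.one_le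
        have h6 : ((2:ℝ)) ≤ (a:ℝ) - 1 := by
          have : (3:ℝ) ≤ (a:ℝ) := by exact_mod_cast ha3
          linarith
        have h7 : ((2:ℝ))^(n.totient) ≤ ((a:ℝ)-1)^(n.totient) :=
          pow_le_pow_left₀ (by norm_num) h6 _
        have h8 : ((2:ℝ))^(q-1) ≤ 2^(n.totient) := pow_le_pow_right₀ one_le_two hφ
        push_cast at hbound
        linarith
      · -- 2 = a
        subst ha2
        rcases eq_or_lt_of_le hk1 with hk2 | hk2
        · -- 1 = k
          have hnqm : m * q = n := by rw [hnm, ← hk2, pow_one]; ring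
          have hqm' : ¬ q ∣ m := by
            intro h
            have := Nat.le_of_dvd hmpos h
            have := hq.two_le
            omega
          have hexp := cyclotomic_expand_eq_cyclotomic_mul hq hqm' ℤ
          have heval := congrArg (eval (2:ℤ)) hexp
          rw [expand_eval, eval_mul, hnqm] at heval
          rw [← hN, hNq] at heval
          -- heval : eval (2^q) (cyclotomic m ℤ) = q * eval 2 (cyclotomic m ℤ)
          rcases Nat.lt_or_ge m 3 with hm3 | hm3
          · interval_cases m
            · -- m = 1
              exfalso
              rw [cyclotomic_one] at heval
              simp at heval
              -- heval : 2^q - 1 = q  (roughly)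
              have hpw : ((2:ℤ))^q = 2 * 2^(q-1) := by
                rw [← pow_succ']
                congr 1
                omega
              have hqZ : ((q:ℤ)) ≤ 2^(q-1) := by exact_mod_cast natIneq1' hq.one_le
              have h2q : (2:ℤ) ≤ 2^(q-1) := by
                calc (2:ℤ) = 2^1 := by norm_num
                _ ≤ 2^(q-1) := pow_le_pow_right₀ (by norm_num) (by have := hq.two_le; omega)
              rw [hpw] at heval
              omega
            · -- m = 2
              rw [cyclotomic_two] at heval
              simp at heval
              -- heval : 2^q + 1 = q * 3
              have hq2 : q ≠ 2 := by
                intro h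
                rw [h] at hqm1
                omega
              by_cases hq3 : q = 3
              · right; right; left
                refine ⟨rfl, ?_⟩
                rw [← hnqm, hq3]
              · exfalso
                have hq4 : 4 ≤ q := by have := hq.two_le; omega
                have hlt := natIneq2' hq4
                have hcast : (3:ℤ) * q < 2^q := by exact_mod_cast hlt
                omega
          · -- 3 ≤ m
            exfalso
            have hq4 : 4 ≤ q := by
              have := Nat.le_of_dvd (by have := hq.two_le; omega) hqm1
              omega
            have hφ2 : 2 ≤ m.totient := by
              have hev := Nat.totient_even (show 2 < m by omega)
              have hpos := Nat.totient_pos.mpr (show 0 < m by omega)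
              obtain ⟨w, hw⟩ := hev
              omega
            set φ := m.totient with hφdef
            have hE := cyclotomic_eval_lt_add_one_pow_totient hm3 (show (1:ℝ) < 2 by norm_num)
            have h2q1 : (1:ℝ) < (2:ℝ)^q := by
              calc (1:ℝ) < 2 := by norm_num
              _ = 2^1 := by norm_num
              _ ≤ 2^q := pow_le_pow_right₀ (by norm_num) hq.one_le
            have hF := sub_one_pow_totient_lt_cyclotomic_eval (show 2 ≤ m by omega) h2q1
            -- cast heval to ℝ
            have hevalR := congrArg (Int.cast : ℤ → ℝ) heval
            rw [Int.cast_mul, evalR', evalR'] at hevalR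
            push_cast at hevalR hE hF
            -- hevalR : eval (2^q : ℝ) (cyclotomic m ℝ) = q * eval 2 (cyclotomic m ℝ)
            rw [hevalR] at hF
            -- hF : ((2^q:ℝ) - 1)^φ < q * eval 2 (cyclotomic m ℝ)
            have hqpos : (0:ℝ) < q := by positivity
            have hE2 : (q:ℝ) * eval 2 (cyclotomic m ℝ) < q * 3^φ := by
              have : eval 2 (cyclotomic m ℝ) < 3^φ := by
                convert hE using 2
                norm_num
              exact (mul_lt_mul_iff_right₀ hqpos).mpr this
            -- lower bound for ((2^q) - 1)^φ
            have key2 : (q:ℝ) * 3^φ ≤ ((2:ℝ)^q - 1)^φ := by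
              have hstep : (3:ℝ) * 2^(q-2) ≤ 2^q - 1 := by
                have h1 : ((2:ℝ))^q = 4 * 2^(q-2) := by
                  have h1' : ((2:ℝ))^((q-2)+2) = 4 * 2^(q-2) := by
                    rw [pow_add]; ring
                  rwa [show (q-2)+2 = q by omega] at h1'
                have h2 : (1:ℝ) ≤ 2^(q-2) := one_le_pow₀ (by norm_num)
                linarith
              have hpos2 : (0:ℝ) ≤ (3:ℝ) * 2^(q-2) := by positivity
              have c1 : ((3:ℝ) * 2^(q-2))^φ ≤ ((2:ℝ)^q - 1)^φ :=
                pow_le_pow_left₀ hpos2 hstep _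
              have c2 : ((3:ℝ) * 2^(q-2))^φ = 3^φ * ((2:ℝ)^(q-2))^φ := by
                rw [mul_pow]
              have c3 : ((2:ℝ)^(q-2))^2 ≤ ((2:ℝ)^(q-2))^φ :=
                pow_le_pow_right₀ (one_le_pow₀ (by norm_num)) hφ2
              have c4 : ((2:ℝ)^(q-2))^2 = 4^(q-2) := by
                rw [← pow_mul, mul_comm, pow_mul]
                norm_num
              have c5 : (q:ℝ) ≤ 4^(q-2) := by exact_mod_cast natIneq3' (by omega)
              have c6 : (0:ℝ) ≤ 3^φ := by positivity
              calc (q:ℝ) * 3^φ ≤ 4^(q-2) * 3^φ := by nlinarith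
                _ = ((2:ℝ)^(q-2))^2 * 3^φ := by rw [c4]
                _ ≤ ((2:ℝ)^(q-2))^φ * 3^φ := by nlinarith [c3, c6]
                _ = ((3:ℝ) * 2^(q-2))^φ := by rw [mul_pow]; ring
                _ ≤ ((2:ℝ)^q - 1)^φ := c1
            linarith
        · -- 2 ≤ k
          exfalso
          have hexp := expandIter' (m := m) hq (k-1)
          have hidx : m * q * q ^ (k-1) = n := by
            rw [hnm]
            have hqq : q * q^(k-1) = q^k := by
              rw [← pow_succ']
              congr 1
              omega
            rw [mul_assoc, hqq]
            ring
          rw [hidx] at hexp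
          have heval := congrArg (eval (2:ℤ)) hexp
          rw [expand_eval] at heval
          rw [← hN, hNq] at heval
          refine lemK' hq (Nat.mul_pos hmpos hq.pos) ⟨m, mul_comm m q⟩ ?_ heval
          -- 4 ≤ 2^(q^(k-1))
          have hqk : 2 ≤ q^(k-1) := by
            calc 2 ≤ q := hq.two_le
            _ = q^1 := (pow_one q).symm
            _ ≤ q^(k-1) := Nat.pow_le_pow_right hq.pos (by omega)
          calc (4:ℤ) = 2^2 := by norm_num
          _ ≤ 2^(q^(k-1)) := pow_le_pow_right₀ (by norm_num) hqk
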